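/- arXiv:1306.1542 — 7 statements merged into one kernel-verified Lean document; each statement's English description precedes it below -/
import Mathlib

section
/- Let ρ be a unitary representation of F₂ on a normed vector space E, let w ∈ F₂ be a nontrivial cyclically reduced word of word length |w|, and let e ∈ E. Then the Brooks map H = H_{w,e} satisfies H(g⁻¹) = −ρ(g⁻¹)H(g) for all g ∈ F₂, and its defect satisfies Δ(H) := sup_{g,g'} ‖H(gg') − H(g) − ρ(g)H(g')‖ ≤ 6·|w|·‖e‖; in particular H is a quasi-cocycle. -/
open scoped BigOperators

abbrev F2 : Type := FreeGroup Bool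

abbrev fa : F2 := FreeGroup.of true
abbrev fb : F2 := FreeGroup.of false

def IsQuasiCocycle {G E : Type*} [Group G] [NormedAddCommGroup E] [NormedSpace ℝ E]
    (ρ : G →* (E ≃ₗᵢ[ℝ] E)) (H : G → E) : Prop :=
  ∃ C : ℝ, ∀ g g' : G, ‖H (g * g') - H g - ρ g (H g')‖ ≤ C

def IsCocycle {G E : Type*} [Group G] [NormedAddCommGroup E] [NormedSpace ℝ E]
    (ρ : G →* (E ≃ₗᵢ[ℝ] E)) (F : G → E) : Prop :=
  ∀ g g' : G, F (g * g') = F g + ρ g (F g')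

def IsCyclicallyReduced (w : F2) : Prop :=
  FreeGroup.reduce (w.toWord ++ w.toWord) = w.toWord ++ w.toWord

def IsRankTwoFree (F : Subgroup F2) : Prop :=
  ∃ x y : F2, Subgroup.closure {x, y} = F ∧
    Function.Injective (FreeGroup.lift (fun t : Bool => if t then x else y))

noncomputable def brooks {E : Type*} [NormedAddCommGroup E] [NormedSpace ℝ E]
    (ρ : F2 →* (E ≃ₗᵢ[ℝ] E)) (w : F2) (e : E) (g : F2) : E :=
  (∑ i ∈ Finset.range g.toWord.length,
      if (g.toWord.drop i).take w.toWord.length = w.toWord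
      then ρ (FreeGroup.mk (g.toWord.take i)) e else 0)
  - ∑ j ∈ Finset.range g.toWord.length,
      if (g.toWord.drop j).take w.toWord.length = w⁻¹.toWord
      then ρ (FreeGroup.mk (g.toWord.take (j + w.toWord.length))) e else 0

namespace BrooksAux

open FreeGroup List

variable {α : Type*} [DecidableEq α]

abbrev NC (a b : α × Bool) : Prop := ¬(a.1 = b.1 ∧ a.2 = !b.2)

lemma reduce_eq_self_of_chain : ∀ {L : List (α × Bool)}, List.Chain' NC L →
    FreeGroup.reduce L = L := by
  intro L h
  induction L with
  | nil => rfl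
  | cons x L ih =>
    rw [FreeGroup.reduce.cons, ih h.tail]
    cases L with
    | nil => rfl
    | cons y t =>
      have : ¬(x.1 = y.1 ∧ x.2 = !y.2) := (List.isChain_cons_cons.mp h).1
      simp [this]

lemma exists_cancel_of_not_chain : ∀ {L : List (α × Bool)}, ¬ List.Chain' NC L →
    ∃ A x b B, L = A ++ (x, b) :: (x, !b) :: B := by
  intro L
  induction L with
  | nil => intro h; exact absurd List.isChain_nil h
  | cons p L ih =>
    intro h
    cases L with
    | nil => exact absurd (List.isChain_singleton _) h
    | cons q t =>
      unfold List.Chain' at h; rw [List.isChain_cons_cons] at h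
      by_cases hpq : NC p q
      · have h2 : ¬ List.Chain' NC (q :: t) := by tauto
        obtain ⟨A, x, b, B, hA⟩ := ih h2
        exact ⟨p :: A, x, b, B, by simp [hA]⟩
      · obtain ⟨h1, h2⟩ : p.1 = q.1 ∧ p.2 = !q.2 := not_not.mp hpq
        refine ⟨[], p.1, p.2, t, ?_⟩
        have hq : q = (p.1, !p.2) := by
          obtain ⟨qa, qb⟩ := q
          obtain ⟨pa, pb⟩ := p
          simp_all
        simp [hq]

lemma chain_of_reduce_eq_self {L : List (α × Bool)} (h : FreeGroup.reduce L = L) :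
    List.Chain' NC L := by
  by_contra hc
  obtain ⟨A, x, b, B, rfl⟩ := exists_cancel_of_not_chain hc
  exact FreeGroup.reduce.not h

lemma reduce_eq_self_iff {L : List (α × Bool)} :
    FreeGroup.reduce L = L ↔ List.Chain' NC L :=
  ⟨chain_of_reduce_eq_self, reduce_eq_self_of_chain⟩

lemma tripod : ∀ (L1 L2 : List (α × Bool)), FreeGroup.reduce L1 = L1 →
    FreeGroup.reduce L2 = L2 →
    ∃ p c q, L1 = p ++ c ∧ L2 = invRev c ++ q ∧ FreeGroup.reduce (L1 ++ L2) = p ++ q := by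
  intro L1
  induction L1 using List.reverseRecOn with
  | nil =>
    intro L2 _ h2
    exact ⟨[], [], L2, rfl, by simp [FreeGroup.invRev], by simpa using h2⟩
  | append_singleton L1' x ih =>
    intro L2 h1 h2
    have hch1 : List.Chain' NC (L1' ++ [x]) := chain_of_reduce_eq_self h1
    have hL1' : FreeGroup.reduce L1' = L1' :=
      reduce_eq_self_of_chain (List.isChain_append.mp hch1).1
    cases L2 with
    | nil =>
      exact ⟨L1' ++ [x], [], [], by simp, by simp [FreeGroup.invRev], by simpa using h1⟩
    | cons y t =>
      have hch2 : List.Chain' NC (y :: t) := chain_of_reduce_eq_self h2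
      have ht : FreeGroup.reduce t = t := reduce_eq_self_of_chain hch2.tail
      by_cases hxy : y = (x.1, !x.2)
      · obtain ⟨p, c, q, hpc, hcq, hr⟩ := ih t hL1' ht
        refine ⟨p, c ++ [x], q, by rw [hpc, List.append_assoc], ?_, ?_⟩
        · have : invRev (c ++ [x]) = (x.1, !x.2) :: invRev c := by
            simp [FreeGroup.invRev]
          rw [this, hxy, hcq]
          rfl
        · have hstep : FreeGroup.Red.Step ((L1' ++ [x]) ++ y :: t) (L1' ++ t) := by
            rw [hxy]
            have := @FreeGroup.Red.Step.not α L1' t x.1 x.2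
            simpa using this
          rw [FreeGroup.reduce.Step.eq hstep, hr]
      · refine ⟨L1' ++ [x], [], y :: t, by simp, by simp [FreeGroup.invRev], ?_⟩
        apply reduce_eq_self_of_chain
        unfold List.Chain'; rw [List.isChain_append]
        refine ⟨hch1, hch2, ?_⟩
        intro a ha b hb
        simp at ha hb
        subst ha; subst hb
        intro ⟨hc1, hc2⟩
        apply hxy
        obtain ⟨ya, yb⟩ := y; obtain ⟨xa, xb⟩ := x
        simp_all




open FreeGroup List Finset

variable {E : Type*} [NormedAddCommGroup E] [NormedSpace ℝ E]

noncomputable def brP (ρ : F2 →* (E ≃ₗᵢ[ℝ] E)) (e : E) (k a : ℕ)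
    (u L : List (Bool × Bool)) : E :=
  ∑ i ∈ Finset.range L.length,
    if (L.drop i).take k = u then ρ (FreeGroup.mk (L.take (i + a))) e else 0

variable (ρ : F2 →* (E ≃ₗᵢ[ℝ] E)) (e : E) {k a : ℕ} {u : List (Bool × Bool)}

lemma rho_mul (x y : F2) (v : E) : ρ (x * y) v = ρ x (ρ y v) := by
  rw [ρ.map_mul]; rfl

lemma window_ne (hu : u.length = k) {L : List (Bool × Bool)} {i : ℕ}
    (hi : i < L.length) (h : L.length < i + k) : (L.drop i).take k ≠ u := by
  intro hEq
  apply_fun List.length at hEq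
  simp only [List.length_take, List.length_drop, hu] at hEq
  omega

lemma brP_eq_sum_support (hu : u.length = k) (hk : 1 ≤ k) (L : List (Bool × Bool)) :
    brP ρ e k a u L = ∑ i ∈ Finset.range (L.length + 1 - k),
      (if (L.drop i).take k = u then ρ (FreeGroup.mk (L.take (i + a))) e else 0) := by
  rw [brP]
  refine (Finset.sum_subset (Finset.range_subset_range.mpr (by omega)) ?_).symm
  intro i hi hni
  rw [Finset.mem_range] at hi hni
  exact if_neg (window_ne hu hi (by omega))


lemma take_invRev (L : List (Bool × Bool)) (m : ℕ) :
    (invRev L).take m = invRev (L.drop (L.length - m)) := by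
  unfold FreeGroup.invRev
  rw [List.take_reverse, List.length_map, List.map_drop]

lemma window_rev {β : Type*} (M : List β) {k i : ℕ} (h : i + k ≤ M.length) :
    (M.reverse.drop (M.length - k - i)).take k = ((M.drop i).take k).reverse := by
  have h1 : M.length - (M.length - k - i) = k + i := by omega
  rw [List.drop_reverse, h1, List.take_reverse, List.length_take]
  have h2 : min (k + i) M.length - k = i := by omega
  rw [h2, List.drop_take]
  have h3 : k + i - i = k := by omega
  rw [h3]

lemma window_invRev (L : List (Bool × Bool)) {k i : ℕ} (h : i + k ≤ L.length) :
    ((invRev L).drop (L.length - k - i)).take k = invRev ((L.drop i).take k) := by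
  unfold FreeGroup.invRev
  rw [List.map_take, List.map_drop]
  have := window_rev (M := L.map (fun g : Bool × Bool => (g.1, !g.2))) (k := k) (i := i)
    (by simpa using h)
  rw [List.length_map] at this
  exact this

lemma mk_drop_inv (L : List (Bool × Bool)) (m : ℕ) :
    (FreeGroup.mk (L.drop m))⁻¹ = (FreeGroup.mk L)⁻¹ * FreeGroup.mk (L.take m) := by
  have h : FreeGroup.mk (L.take m) * FreeGroup.mk (L.drop m) = FreeGroup.mk L := by
    rw [FreeGroup.mul_mk, List.take_append_drop]
  rw [← h, mul_inv_rev, mul_assoc, inv_mul_cancel, mul_one]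

lemma brP_invRev (hk : 1 ≤ k) (hu : u.length = k) {b : ℕ} (hab : a + b = k)
    (L : List (Bool × Bool)) :
    brP ρ e k a u (invRev L) = ρ (FreeGroup.mk L)⁻¹ (brP ρ e k b (invRev u) L) := by
  have hn : (invRev L).length = L.length := FreeGroup.invRev_length
  have huv : (invRev u).length = k := by rw [FreeGroup.invRev_length, hu]
  rw [brP_eq_sum_support ρ e hu hk, brP_eq_sum_support ρ e huv hk, hn, map_sum,
    ← Finset.sum_range_reflect]
  apply Finset.sum_congr rfl
  intro i hi
  rw [Finset.mem_range] at hi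
  have hik : i + k ≤ L.length := by omega
  have hidx : L.length + 1 - k - 1 - i = L.length - k - i := by omega
  rw [hidx]
  have hcond : (((invRev L).drop (L.length - k - i)).take k = u)
      ↔ ((L.drop i).take k = invRev u) := by
    rw [window_invRev L hik]
    constructor
    · intro h; rw [← h, FreeGroup.invRev_invRev]
    · intro h; rw [h, FreeGroup.invRev_invRev]
  have hpre : (invRev L).take (L.length - k - i + a) = invRev (L.drop (i + b)) := by
    rw [take_invRev]
    have : L.length - (L.length - k - i + a) = i + b := by omega
    rw [this]
  have hval : ρ (FreeGroup.mk ((invRev L).take (L.length - k - i + a))) e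
      = ρ (FreeGroup.mk L)⁻¹ (ρ (FreeGroup.mk (L.take (i + b))) e) := by
    rw [hpre, ← FreeGroup.inv_mk, mk_drop_inv, rho_mul]
  rw [apply_ite (⇑(ρ (FreeGroup.mk L)⁻¹)), map_zero]
  exact if_congr hcond hval rfl


lemma brP_append (A B : List (Bool × Bool)) :
    brP ρ e k a u (A ++ B) = (∑ i ∈ Finset.range A.length,
        if ((A ++ B).drop i).take k = u then ρ (FreeGroup.mk ((A ++ B).take (i + a))) e else 0)
      + ρ (FreeGroup.mk A) (brP ρ e k a u B) := by
  rw [brP, List.length_append, Finset.sum_range_add]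
  congr 1
  rw [brP, map_sum]
  apply Finset.sum_congr rfl
  intro i _
  have hd : (A ++ B).drop (A.length + i) = B.drop i := List.drop_length_add_append i
  have ht : (A ++ B).take (A.length + i + a) = A ++ B.take (i + a) := by
    rw [add_assoc]; exact List.take_length_add_append _
  rw [hd, ht, ← FreeGroup.mul_mk, rho_mul, apply_ite (⇑(ρ (FreeGroup.mk A))), map_zero]

lemma brP_junction (hu : u.length = k) (ha : a ≤ k) (A B : List (Bool × Bool)) :
    ‖brP ρ e k a u (A ++ B) - brP ρ e k a u A - ρ (FreeGroup.mk A) (brP ρ e k a u B)‖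
      ≤ (k : ℝ) * ‖e‖ := by
  rw [brP_append]
  have h1 : ∀ x y z : E, x + y - z - y = x - z := fun x y z => by abel
  rw [h1, brP, ← Finset.sum_sub_distrib]
  rw [← Finset.sum_filter_of_ne (p := fun i => A.length < i + k) ?hne]
  case hne =>
    intro i hi hne
    rw [Finset.mem_range] at hi
    by_contra hle
    push_neg at hle
    apply hne
    have hw : ((A ++ B).drop i).take k = (A.drop i).take k := by
      rw [List.drop_append_of_le_length (by omega),
        List.take_append_of_le_length (by rw [List.length_drop]; omega)]
    have hp : (A ++ B).take (i + a) = A.take (i + a) :=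
      List.take_append_of_le_length (by omega)
    rw [hw, hp, sub_self]
  have hcard : (Finset.filter (fun i => A.length < i + k) (Finset.range A.length)).card ≤ k := by
    have hsub : Finset.filter (fun i => A.length < i + k) (Finset.range A.length)
        ⊆ Finset.Ico (A.length - k) A.length := by
      intro i hi
      simp only [Finset.mem_filter, Finset.mem_range, Finset.mem_Ico] at *
      omega
    calc _ ≤ (Finset.Ico (A.length - k) A.length).card := Finset.card_le_card hsub
      _ = A.length - (A.length - k) := Nat.card_Ico _ _
      _ ≤ k := by omega
  refine le_trans (norm_sum_le _ _) (le_trans (Finset.sum_le_card_nsmul _ _ ‖e‖ ?_) ?_)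
  · intro i hi
    simp only [Finset.mem_filter, Finset.mem_range] at hi
    have hz : (if (A.drop i).take k = u then ρ (FreeGroup.mk (A.take (i + a))) e else 0) = 0 :=
      if_neg (window_ne hu hi.1 hi.2)
    rw [hz, sub_zero]
    split_ifs
    · rw [LinearIsometryEquiv.norm_map]
    · simp [norm_nonneg]
  · rw [nsmul_eq_mul]
    exact mul_le_mul_of_nonneg_right (Nat.cast_le.mpr hcard) (norm_nonneg e)


lemma six_bound (f : E ≃ₗᵢ[ℝ] E) (d1 d2 d3 d4 d5 d6 : E) (C : ℝ)
    (h1 : ‖d1‖ ≤ C) (h2 : ‖d2‖ ≤ C) (h3 : ‖d3‖ ≤ C) (h4 : ‖d4‖ ≤ C)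
    (h5 : ‖d5‖ ≤ C) (h6 : ‖d6‖ ≤ C) :
    ‖d1 - d2 - (d3 - d4) - f (d5 - d6)‖ ≤ 6 * C := by
  have e1 : ‖d1 - d2 - (d3 - d4) - f (d5 - d6)‖
      ≤ ‖d1 - d2 - (d3 - d4)‖ + ‖f (d5 - d6)‖ := norm_sub_le _ _
  have e2 : ‖d1 - d2 - (d3 - d4)‖ ≤ ‖d1 - d2‖ + ‖d3 - d4‖ := norm_sub_le _ _
  have e3 : ‖d1 - d2‖ ≤ ‖d1‖ + ‖d2‖ := norm_sub_le _ _
  have e4 : ‖d3 - d4‖ ≤ ‖d3‖ + ‖d4‖ := norm_sub_le _ _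
  have e5 : ‖f (d5 - d6)‖ = ‖d5 - d6‖ := f.norm_map _
  have e6 : ‖d5 - d6‖ ≤ ‖d5‖ + ‖d6‖ := norm_sub_le _ _
  linarith

end BrooksAux


/-- the Brooks map H_{w,e} for a nontrivial cyclically reduced word w
is anti-symmetric and has defect at most 6·|w|·‖e‖; in particular it is a
quasi-cocycle. -/
theorem stmt1 {E : Type*} [NormedAddCommGroup E] [NormedSpace ℝ E]
    (ρ : F2 →* (E ≃ₗᵢ[ℝ] E)) (w : F2) (hw : w ≠ 1) (hcr : IsCyclicallyReduced w)
    (e : E) :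
    (∀ g : F2, brooks ρ w e g⁻¹ = - (ρ g⁻¹ (brooks ρ w e g))) ∧
    (∀ g g' : F2,
      ‖brooks ρ w e (g * g') - brooks ρ w e g - ρ g (brooks ρ w e g')‖
        ≤ 6 * (w.toWord.length : ℝ) * ‖e‖) ∧
    IsQuasiCocycle ρ (brooks ρ w e) := by
  classical
  have hk : 1 ≤ w.toWord.length := by
    rcases Nat.eq_zero_or_pos w.toWord.length with h | h
    · exact absurd (FreeGroup.toWord_eq_nil_iff.mp (List.length_eq_zero_iff.mp h)) hw
    · exact h
  have huv : w⁻¹.toWord = FreeGroup.invRev w.toWord := FreeGroup.toWord_inv w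
  have hkv : (w⁻¹).toWord.length = w.toWord.length := by
    rw [huv, FreeGroup.invRev_length]
  have hbr : ∀ g : F2, brooks ρ w e g
      = BrooksAux.brP ρ e w.toWord.length 0 w.toWord g.toWord
        - BrooksAux.brP ρ e w.toWord.length w.toWord.length w⁻¹.toWord g.toWord :=
    fun g => rfl
  have a1 : ∀ c : List (Bool × Bool),
      BrooksAux.brP ρ e w.toWord.length 0 w.toWord (FreeGroup.invRev c)
        = ρ (FreeGroup.mk c)⁻¹
            (BrooksAux.brP ρ e w.toWord.length w.toWord.length w⁻¹.toWord c) := by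
    intro c
    have := BrooksAux.brP_invRev ρ e (k := w.toWord.length) (a := 0) (u := w.toWord)
      hk rfl (b := w.toWord.length) (by omega) c
    rwa [← huv] at this
  have a2 : ∀ c : List (Bool × Bool),
      BrooksAux.brP ρ e w.toWord.length w.toWord.length w⁻¹.toWord (FreeGroup.invRev c)
        = ρ (FreeGroup.mk c)⁻¹
            (BrooksAux.brP ρ e w.toWord.length 0 w.toWord c) := by
    intro c
    have := BrooksAux.brP_invRev ρ e (k := w.toWord.length) (a := w.toWord.length)
      (u := w⁻¹.toWord) hk hkv (b := 0) (by omega) c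
    rw [huv] at this ⊢
    rwa [FreeGroup.invRev_invRev] at this
  have partA : ∀ g : F2, brooks ρ w e g⁻¹ = - (ρ g⁻¹ (brooks ρ w e g)) := by
    intro g
    rw [hbr, hbr, FreeGroup.toWord_inv g, a1 g.toWord, a2 g.toWord, FreeGroup.mk_toWord,
      ← map_sub, ← neg_sub, map_neg]
  have partB : ∀ g g' : F2,
      ‖brooks ρ w e (g * g') - brooks ρ w e g - ρ g (brooks ρ w e g')‖
        ≤ 6 * (w.toWord.length : ℝ) * ‖e‖ := by
    intro g g'
    obtain ⟨p, c, q, hpc, hcq, hr⟩ :=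
      BrooksAux.tripod g.toWord g'.toWord (FreeGroup.reduce_toWord g)
        (FreeGroup.reduce_toWord g')
    have hgg' : (g * g').toWord = p ++ q := by
      calc (g * g').toWord = (FreeGroup.mk (g.toWord ++ g'.toWord)).toWord := by
            rw [← FreeGroup.mul_mk, FreeGroup.mk_toWord, FreeGroup.mk_toWord]
        _ = FreeGroup.reduce (g.toWord ++ g'.toWord) := FreeGroup.toWord_mk
        _ = p ++ q := hr
    have hgp : ∀ v : E, ρ g (ρ (FreeGroup.mk (FreeGroup.invRev c)) v)
        = ρ (FreeGroup.mk p) v := by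
      intro v
      rw [← BrooksAux.rho_mul]
      congr 2
      rw [← FreeGroup.inv_mk, ← FreeGroup.mk_toWord (x := g), hpc, ← FreeGroup.mul_mk,
        mul_inv_cancel_right]
    have hgc : ∀ v : E, ρ g (ρ (FreeGroup.mk c)⁻¹ v) = ρ (FreeGroup.mk p) v := by
      intro v
      rw [← BrooksAux.rho_mul]
      congr 2
      rw [← FreeGroup.mk_toWord (x := g), hpc, ← FreeGroup.mul_mk, mul_inv_cancel_right]
    rw [hbr, hbr, hbr, hgg', hpc, hcq]
    have key : BrooksAux.brP ρ e w.toWord.length 0 w.toWord (p ++ q)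
          - BrooksAux.brP ρ e w.toWord.length w.toWord.length w⁻¹.toWord (p ++ q)
        - (BrooksAux.brP ρ e w.toWord.length 0 w.toWord (p ++ c)
          - BrooksAux.brP ρ e w.toWord.length w.toWord.length w⁻¹.toWord (p ++ c))
        - ρ g (BrooksAux.brP ρ e w.toWord.length 0 w.toWord (FreeGroup.invRev c ++ q)
          - BrooksAux.brP ρ e w.toWord.length w.toWord.length w⁻¹.toWord
              (FreeGroup.invRev c ++ q))
        = (BrooksAux.brP ρ e w.toWord.length 0 w.toWord (p ++ q)
            - BrooksAux.brP ρ e w.toWord.length 0 w.toWord p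
            - ρ (FreeGroup.mk p) (BrooksAux.brP ρ e w.toWord.length 0 w.toWord q))
        - (BrooksAux.brP ρ e w.toWord.length w.toWord.length w⁻¹.toWord (p ++ q)
            - BrooksAux.brP ρ e w.toWord.length w.toWord.length w⁻¹.toWord p
            - ρ (FreeGroup.mk p)
                (BrooksAux.brP ρ e w.toWord.length w.toWord.length w⁻¹.toWord q))
        - ((BrooksAux.brP ρ e w.toWord.length 0 w.toWord (p ++ c)
            - BrooksAux.brP ρ e w.toWord.length 0 w.toWord p
            - ρ (FreeGroup.mk p) (BrooksAux.brP ρ e w.toWord.length 0 w.toWord c))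
          - (BrooksAux.brP ρ e w.toWord.length w.toWord.length w⁻¹.toWord (p ++ c)
            - BrooksAux.brP ρ e w.toWord.length w.toWord.length w⁻¹.toWord p
            - ρ (FreeGroup.mk p)
                (BrooksAux.brP ρ e w.toWord.length w.toWord.length w⁻¹.toWord c)))
        - ρ g ((BrooksAux.brP ρ e w.toWord.length 0 w.toWord (FreeGroup.invRev c ++ q)
            - BrooksAux.brP ρ e w.toWord.length 0 w.toWord (FreeGroup.invRev c)
            - ρ (FreeGroup.mk (FreeGroup.invRev c))
                (BrooksAux.brP ρ e w.toWord.length 0 w.toWord q))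
          - (BrooksAux.brP ρ e w.toWord.length w.toWord.length w⁻¹.toWord
                (FreeGroup.invRev c ++ q)
            - BrooksAux.brP ρ e w.toWord.length w.toWord.length w⁻¹.toWord
                (FreeGroup.invRev c)
            - ρ (FreeGroup.mk (FreeGroup.invRev c))
                (BrooksAux.brP ρ e w.toWord.length w.toWord.length w⁻¹.toWord q))) := by
      rw [a1 c, a2 c]
      simp only [map_sub, hgp, hgc]
      abel
    rw [key, mul_assoc]
    exact BrooksAux.six_bound (ρ g) _ _ _ _ _ _ _
      (BrooksAux.brP_junction ρ e (k := w.toWord.length) (a := 0) (u := w.toWord)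
        rfl (Nat.zero_le _) p q)
      (BrooksAux.brP_junction ρ e hkv (le_refl _) p q)
      (BrooksAux.brP_junction ρ e (k := w.toWord.length) (a := 0) (u := w.toWord)
        rfl (Nat.zero_le _) p c)
      (BrooksAux.brP_junction ρ e hkv (le_refl _) p c)
      (BrooksAux.brP_junction ρ e (k := w.toWord.length) (a := 0) (u := w.toWord)
        rfl (Nat.zero_le _) (FreeGroup.invRev c) q)
      (BrooksAux.brP_junction ρ e hkv (le_refl _) (FreeGroup.invRev c) q)
  exact ⟨partA, partB, ⟨6 * (w.toWord.length : ℝ) * ‖e‖, partB⟩⟩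
end

section
/- Let E be a uniformly convex real Banach space. For every R > 0 there exist ε > 0 and μ > 0 with the following property: if v ∈ E with ‖v‖ ≤ R, f : E → ℝ is a continuous linear functional with ‖f‖ = 1 and f(v) = ‖v‖, and e ∈ E is a vector with ‖e‖ ≥ 1/2 and f(e) ≥ −μ, then ‖v + e‖ ≥ ‖v‖ + ε. -/
open scoped BigOperators

/-- in a uniformly convex real Banach space, for every R > 0 there are
ε > 0 and μ > 0 such that whenever ‖v‖ ≤ R, f is a norming functional for v of norm 1,
and e has ‖e‖ ≥ 1/2 and f(e) ≥ −μ, then ‖v + e‖ ≥ ‖v‖ + ε. -/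
theorem stmt2 {E : Type*} [NormedAddCommGroup E] [NormedSpace ℝ E]
    [CompleteSpace E] [UniformConvexSpace E] (R : ℝ) (hR : 0 < R) :
    ∃ ε > (0:ℝ), ∃ μ > (0:ℝ), ∀ (v : E) (f : E →L[ℝ] ℝ) (e : E),
      ‖v‖ ≤ R → ‖f‖ = 1 → f v = ‖v‖ → 1/2 ≤ ‖e‖ → -μ ≤ f e →
      ‖v‖ + ε ≤ ‖v + e‖ := by
  obtain ⟨δ, hδ, hconv⟩ := exists_forall_closed_ball_dist_add_le_two_sub E
    (ε := 1 / (2 * (R + 1))) (by positivity)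
  refine ⟨min (1/4) (δ/32), lt_min (by norm_num) (by positivity), δ/32, by positivity, ?_⟩
  set ε := min (1/4) (δ/32) with hε
  have hε4 : ε ≤ 1/4 := min_le_left _ _
  have hεδ : ε ≤ δ/32 := min_le_right _ _
  have hε0 : 0 < ε := lt_min (by norm_num) (by positivity)
  intro v f e hvR hf hfv he hfe
  rcases le_or_gt ‖v‖ (1/8) with hv | hv
  · -- small v: triangle inequality suffices
    have h1 : ‖e‖ ≤ ‖v + e‖ + ‖v‖ := by
      calc ‖e‖ = ‖(v + e) + (-v)‖ := by congr 1; abel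
        _ ≤ ‖v + e‖ + ‖-v‖ := norm_add_le _ _
        _ = ‖v + e‖ + ‖v‖ := by rw [norm_neg]
    linarith
  · by_contra hcon
    push_neg at hcon
    set M : ℝ := ‖v‖ + ε with hM
    have hM0 : 0 < M := by positivity
    have hMR : M ≤ R + 1 := by linarith
    have hnorm : ∀ z : E, ‖M⁻¹ • z‖ = ‖z‖ / M := by
      intro z
      rw [norm_smul, Real.norm_eq_abs, abs_of_pos (inv_pos.2 hM0), inv_mul_eq_div]
    have hx : ‖M⁻¹ • v‖ ≤ 1 := by
      rw [hnorm, div_le_one hM0]; linarith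
    have hy : ‖M⁻¹ • (v + e)‖ ≤ 1 := by
      rw [hnorm, div_le_one hM0]; linarith
    have hxy : 1 / (2 * (R + 1)) ≤ ‖M⁻¹ • v - M⁻¹ • (v + e)‖ := by
      have h1 : M⁻¹ • v - M⁻¹ • (v + e) = M⁻¹ • (-e) := by
        rw [← smul_sub]; congr 1; abel
      rw [h1, hnorm, norm_neg, le_div_iff₀ hM0]
      calc 1 / (2 * (R + 1)) * M ≤ 1 / (2 * (R + 1)) * (R + 1) := by
            apply mul_le_mul_of_nonneg_left hMR (by positivity)
        _ = 1/2 := by field_simp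
        _ ≤ ‖e‖ := he
    have hsum := hconv hx hy hxy
    have hsum' : ‖v + (v + e)‖ ≤ (2 - δ) * M := by
      have heq : M⁻¹ • v + M⁻¹ • (v + e) = M⁻¹ • (v + (v + e)) := by
        rw [← smul_add]
      rw [heq, hnorm, div_le_iff₀ hM0] at hsum
      linarith
    have hfle : f (v + (v + e)) ≤ ‖v + (v + e)‖ := by
      calc f (v + (v + e)) ≤ |f (v + (v + e))| := le_abs_self _
        _ = ‖f (v + (v + e))‖ := (Real.norm_eq_abs _).symm
        _ ≤ ‖f‖ * ‖v + (v + e)‖ := f.le_opNorm _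
        _ = ‖v + (v + e)‖ := by rw [hf, one_mul]
    have hfval : f (v + (v + e)) = 2 * ‖v‖ + f e := by
      rw [map_add, map_add, hfv]; ring
    have hdM : δ/8 ≤ δ * M := by
      have h18 : (1:ℝ)/8 ≤ M := by linarith
      calc δ/8 = δ * (1/8) := by ring
        _ ≤ δ * M := mul_le_mul_of_nonneg_left h18 hδ.le
    have hexp : (2 - δ) * M = 2 * ‖v‖ + 2 * ε - δ * M := by rw [hM]; ring
    clear_value ε M
    linarith
end

section
/- Let ρ be a unitary representation of F₂ = ⟨a,b⟩ on a uniformly convex real Banach space E (such a space is reflexive), and let G : F₂ → E be a cocycle whose restrictions to the subgroups ⟨a², b⟩ and ⟨a³, b⟩ are bounded. Then either G is bounded on all of F₂, or there exists a rank-two free subgroup F ≤ F₂ such that ρ restricted to F fixes some nonzero vector of E. -/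
open scoped BigOperators

set_option linter.unusedSectionVars false


section Circum
variable {E : Type*} [NormedAddCommGroup E] [NormedSpace ℝ E]

noncomputable def crad (S : Set E) (x : E) : ℝ := sSup ((fun s => ‖x - s‖) '' S)

lemma crad_bddAbove {S : Set E} {C : ℝ} (hC : ∀ s ∈ S, ‖s‖ ≤ C) (x : E) :
    BddAbove ((fun s => ‖x - s‖) '' S) := by
  refine ⟨‖x‖ + C, ?_⟩
  rintro _ ⟨s, hs, rfl⟩
  exact (norm_sub_le _ _).trans (by linarith [hC s hs])

lemma le_crad {S : Set E} {C : ℝ} (hC : ∀ s ∈ S, ‖s‖ ≤ C) (x : E) {s : E} (hs : s ∈ S) :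
    ‖x - s‖ ≤ crad S x := le_csSup (crad_bddAbove hC x) ⟨s, hs, rfl⟩

lemma crad_le {S : Set E} (hS : S.Nonempty) {x : E} {M : ℝ} (h : ∀ s ∈ S, ‖x - s‖ ≤ M) :
    crad S x ≤ M := csSup_le (hS.image _) (by rintro _ ⟨s, hs, rfl⟩; exact h s hs)

lemma crad_nonneg {S : Set E} {C : ℝ} (hC : ∀ s ∈ S, ‖s‖ ≤ C) (hS : S.Nonempty) (x : E) :
    0 ≤ crad S x := by
  obtain ⟨s, hs⟩ := hS
  exact (norm_nonneg _).trans (le_crad hC x hs)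

lemma uc_scaled [UniformConvexSpace E] {B ε : ℝ} (hB : 0 < B) (hε : 0 < ε) :
    ∃ δ > 0, ∀ R : ℝ, 0 < R → R ≤ B → ∀ u v : E, ‖u‖ ≤ R → ‖v‖ ≤ R → ε ≤ ‖u - v‖ →
      ‖u + v‖ ≤ 2 * R - δ := by
  obtain ⟨δ₀, hδ₀, h⟩ := exists_forall_closed_ball_dist_add_le_two_sub E (div_pos hε hB)
  refine ⟨δ₀ * ε / 2, by positivity, fun R hR hRB u v hu hv huv => ?_⟩
  have hRinv : (0:ℝ) < R⁻¹ := inv_pos.2 hR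
  have hu' : ‖R⁻¹ • u‖ ≤ 1 := by
    rw [norm_smul, Real.norm_eq_abs, abs_of_pos hRinv]
    calc R⁻¹ * ‖u‖ ≤ R⁻¹ * R := by gcongr
      _ = 1 := inv_mul_cancel₀ hR.ne'
  have hv' : ‖R⁻¹ • v‖ ≤ 1 := by
    rw [norm_smul, Real.norm_eq_abs, abs_of_pos hRinv]
    calc R⁻¹ * ‖v‖ ≤ R⁻¹ * R := by gcongr
      _ = 1 := inv_mul_cancel₀ hR.ne'
  have hsub : ε / B ≤ ‖R⁻¹ • u - R⁻¹ • v‖ := by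
    rw [← smul_sub, norm_smul, Real.norm_eq_abs, abs_of_pos hRinv, div_eq_mul_inv, mul_comm ε]
    have h1 : B⁻¹ ≤ R⁻¹ := by
      apply inv_anti₀ hR hRB
    calc B⁻¹ * ε ≤ R⁻¹ * ‖u - v‖ := by
          apply mul_le_mul h1 huv hε.le hRinv.le
      _ = R⁻¹ * ‖u - v‖ := rfl
  have hadd := h hu' hv' hsub
  rw [← smul_add, norm_smul, Real.norm_eq_abs, abs_of_pos hRinv] at hadd
  have hR2 : ε / 2 ≤ R := by
    have : ε ≤ 2 * R := huv.trans ((norm_sub_le _ _).trans (by linarith))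
    linarith
  have := (inv_mul_le_iff₀ hR).1 hadd
  nlinarith [hδ₀.le, hε.le]

lemma exists_affine_fixed {Γ : Type*} [Group Γ] [CompleteSpace E] [UniformConvexSpace E]
    (ρ : Γ →* (E ≃ₗᵢ[ℝ] E)) (G : Γ → E)
    (hG : ∀ g g' : Γ, G (g * g') = G g + ρ g (G g')) (H : Subgroup Γ) {C : ℝ}
    (hC : ∀ g ∈ H, ‖G g‖ ≤ C) :
    ∃ x : E, ∀ h ∈ H, ρ h x + G h = x := by
  have : Nonempty E := ⟨0⟩
  set S : Set E := G '' (H : Set Γ) with hSdef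
  have hSne : S.Nonempty := ⟨G 1, 1, H.one_mem, rfl⟩
  have hSC : ∀ s ∈ S, ‖s‖ ≤ C := by rintro _ ⟨g, hg, rfl⟩; exact hC g hg
  set r₀ : ℝ := ⨅ x : E, crad S x with hr₀def
  have hbdd : BddBelow (Set.range (crad S)) := by
    refine ⟨0, ?_⟩; rintro _ ⟨x, rfl⟩; exact crad_nonneg hSC hSne x
  have hr₀_le : ∀ x : E, r₀ ≤ crad S x := fun x => ciInf_le hbdd x
  have hr₀_nonneg : 0 ≤ r₀ := le_ciInf fun x => crad_nonneg hSC hSne x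
  -- key: approximate minimizers are close
  have key : ∀ ε : ℝ, 0 < ε → ∃ η > 0, ∀ u v : E,
      crad S u ≤ r₀ + η → crad S v ≤ r₀ + η → ‖u - v‖ < ε := by
    intro ε hε
    obtain ⟨δ, hδ, hconv⟩ := uc_scaled (B := r₀ + 1) (E := E) (by linarith) hε
    refine ⟨min (δ / 4) 1, by positivity, fun u v hu hv => ?_⟩
    by_contra hcon
    push_neg at hcon
    set R : ℝ := max (crad S u) (crad S v) with hRdef
    have hRle : R ≤ r₀ + min (δ / 4) 1 := max_le hu hv
    have hRB : R ≤ r₀ + 1 := hRle.trans (by have := min_le_right (δ/4) 1; linarith)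
    have hR2 : ε / 2 ≤ R := by
      obtain ⟨s, hs⟩ := hSne
      have h1 : ‖u - s‖ ≤ R := (le_crad hSC u hs).trans (le_max_left _ _)
      have h2 : ‖v - s‖ ≤ R := (le_crad hSC v hs).trans (le_max_right _ _)
      have : ‖u - v‖ ≤ ‖u - s‖ + ‖v - s‖ := by
        have := norm_sub_le (u - s) (v - s)
        simpa [sub_sub_sub_cancel_right] using this
      linarith
    have hRpos : 0 < R := lt_of_lt_of_le (by linarith) hR2
    have hmid : crad S ((1/2 : ℝ) • (u + v)) ≤ R - δ / 2 := by
      apply crad_le hSne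
      intro s hs
      have h1 : ‖u - s‖ ≤ R := (le_crad hSC u hs).trans (le_max_left _ _)
      have h2 : ‖v - s‖ ≤ R := (le_crad hSC v hs).trans (le_max_right _ _)
      have h3 : ε ≤ ‖(u - s) - (v - s)‖ := by rwa [sub_sub_sub_cancel_right]
      have h4 := hconv R hRpos hRB (u - s) (v - s) h1 h2 h3
      have h5 : (1/2 : ℝ) • (u + v) - s = (1/2 : ℝ) • ((u - s) + (v - s)) := by
        module
      rw [h5, norm_smul, Real.norm_eq_abs]
      rw [abs_of_pos (by norm_num : (0:ℝ) < 1/2)]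
      linarith
    have := hr₀_le ((1/2 : ℝ) • (u + v))
    have hmin : min (δ / 4) 1 ≤ δ / 4 := min_le_left _ _
    linarith
  -- minimizing sequence
  have happrox : ∀ n : ℕ, ∃ x : E, crad S x < r₀ + 1 / (n + 1) := by
    intro n
    apply exists_lt_of_ciInf_lt
    rw [← hr₀def]
    have : (0:ℝ) < 1 / (n + 1) := by positivity
    linarith
  choose x hx using happrox
  have hcauchy : CauchySeq x := by
    rw [Metric.cauchySeq_iff']
    intro ε hε
    obtain ⟨η, hη, hkey⟩ := key ε hε
    obtain ⟨N, hN⟩ := exists_nat_one_div_lt hη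
    refine ⟨N, fun n hn => ?_⟩
    rw [dist_eq_norm]
    apply hkey
    · have h1 : (1:ℝ) / (n + 1) ≤ 1 / (N + 1) := by
        apply one_div_le_one_div_of_le (by positivity)
        have : (N:ℝ) ≤ n := Nat.cast_le.2 hn
        push_cast; linarith
      have := (hx n).le
      push_cast at h1 ⊢
      linarith [hN]
    · have := (hx N).le
      push_cast
      linarith [hN]
  obtain ⟨c, hc⟩ := cauchySeq_tendsto_of_complete hcauchy
  have hcrad_c : crad S c ≤ r₀ := by
    apply crad_le hSne
    intro s hs
    have h1 : Filter.Tendsto (fun n => ‖x n - s‖) Filter.atTop (nhds ‖c - s‖) :=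
      ((hc.sub_const s).norm)
    have h2 : Filter.Tendsto (fun n : ℕ => r₀ + 1 / (n + 1)) Filter.atTop (nhds r₀) := by
      have : Filter.Tendsto (fun n : ℕ => 1 / ((n : ℝ) + 1)) Filter.atTop (nhds 0) :=
        tendsto_one_div_add_atTop_nhds_zero_nat
      have h3 := Filter.Tendsto.add (tendsto_const_nhds (x := r₀) (f := Filter.atTop (α := ℕ))) this
      simpa using h3
    refine le_of_tendsto_of_tendsto' h1 h2 fun n => ?_
    exact (le_crad hSC (x n) hs).trans (hx n).le
  have hc_eq : crad S c = r₀ := le_antisymm hcrad_c (hr₀_le c)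
  have huniq : ∀ y : E, crad S y ≤ r₀ → y = c := by
    intro y hy
    by_contra hne
    have hpos : 0 < ‖y - c‖ := by
      rw [norm_pos_iff]; exact sub_ne_zero.2 hne
    obtain ⟨η, hη, hkey⟩ := key ‖y - c‖ hpos
    exact absurd (hkey y c (by linarith) (by linarith)) (lt_irrefl _)
  refine ⟨c, fun h hh => ?_⟩
  apply huniq
  apply crad_le hSne
  rintro _ ⟨g, hg, rfl⟩
  have hmem : h⁻¹ * g ∈ H := H.mul_mem (H.inv_mem hh) hg
  have hGg : G g = G h + ρ h (G (h⁻¹ * g)) := by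
    have := hG h (h⁻¹ * g)
    rwa [mul_inv_cancel_left] at this
  have heq : ρ h c + G h - G g = ρ h (c - G (h⁻¹ * g)) := by
    rw [hGg, map_sub]; abel
  rw [heq, LinearIsometryEquiv.norm_map]
  rw [← hc_eq]
  exact le_crad hSC c ⟨h⁻¹ * g, hmem, rfl⟩

end Circum



def headSet (x : Bool × Bool) : Set F2 := {w | w.toWord.head? = some x}

lemma mul_mem_headSet (x : Bool × Bool) {w : F2} (hw : w.toWord.head? ≠ some (x.1, !x.2)) :
    (FreeGroup.mk [x] * w) ∈ headSet x := by
  have h1 : (FreeGroup.mk [x] * w).toWord = x :: w.toWord := by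
    conv_lhs => rw [← FreeGroup.mk_toWord (x := w)]
    rw [FreeGroup.mul_mk, FreeGroup.toWord_mk, List.singleton_append, FreeGroup.reduce.cons,
      FreeGroup.reduce_toWord]
    cases hL : w.toWord with
    | nil => rfl
    | cons hd tl =>
      simp only []
      rw [if_neg]
      rintro ⟨ha, hb⟩
      apply hw
      rw [hL]
      have : hd = (x.1, !x.2) := by
        refine Prod.ext ha.symm ?_
        rw [hb, Bool.not_not]
      rw [this]
      rfl
  show _ = _
  rw [h1]
  rfl

lemma pow_mul_mem_headSet (x : Bool × Bool) (n : ℕ) (hn : 1 ≤ n) {w : F2}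
    (hw : w ∉ headSet (x.1, !x.2)) : (FreeGroup.mk [x]) ^ n * w ∈ headSet x := by
  induction n with
  | zero => omega
  | succ m ih =>
    rcases Nat.eq_or_lt_of_le hn with h | h
    · rw [← h, pow_one]
      exact mul_mem_headSet x hw
    · have hm : 1 ≤ m := by omega
      have hmem := ih hm
      rw [pow_succ', mul_assoc]
      apply mul_mem_headSet
      have : (FreeGroup.mk [x] ^ m * w).toWord.head? = some x := hmem
      rw [this]
      intro hcon
      have : x.2 = !x.2 := congrArg (Prod.snd) (Option.some_injective _ hcon)
      simp at this

lemma of_eq_mk (a : Bool) : FreeGroup.of a = FreeGroup.mk [(a, true)] := rfl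

lemma inv_of_eq_mk (a : Bool) : (FreeGroup.of a)⁻¹ = FreeGroup.mk [(a, false)] := by
  rw [of_eq_mk, FreeGroup.inv_mk]
  rfl

lemma inj6 : Function.Injective
    (FreeGroup.lift (fun t : Bool => if t then fa ^ 6 else fb)) := by
  have key : ∀ i : Bool, (if i then fa ^ 6 else fb) = FreeGroup.mk [(i, true)] ^ (if i then 6 else 1) := by
    intro i
    cases i <;> simp [of_eq_mk]
  apply FreeGroup.injective_lift_of_ping_pong (α := F2)
    (X := fun i : Bool => headSet (i, true)) (Y := fun i : Bool => headSet (i, false))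
  · exact fun i => ⟨FreeGroup.of i, by simp [headSet]⟩
  · intro i j hij
    show Disjoint (headSet (i, true)) (headSet (j, true))
    rw [Set.disjoint_left]
    intro w hwi hwj
    have : some (i, true) = some (j, true) := by
      rw [← hwi, ← hwj]
    exact hij (by simpa using this)
  · intro i j hij
    show Disjoint (headSet (i, false)) (headSet (j, false))
    rw [Set.disjoint_left]
    intro w hwi hwj
    have : some (i, false) = some (j, false) := by
      rw [← hwi, ← hwj]
    exact hij (by simpa using this)
  · intro i j
    rw [Set.disjoint_left]
    intro w hwi hwj
    have : some (i, true) = some (j, false) := by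
      rw [← hwi, ← hwj]
    simp at this
  · intro i
    rintro _ ⟨w, hw, rfl⟩
    rw [Set.mem_compl_iff] at hw
    show (if i then fa ^ 6 else fb) * w ∈ headSet (i, true)
    rw [key i]
    exact pow_mul_mem_headSet (i, true) _ (by cases i <;> norm_num) hw
  · intro i
    rintro _ ⟨w, hw, rfl⟩
    rw [Set.mem_compl_iff] at hw
    show (if i then fa ^ 6 else fb)⁻¹ * w ∈ headSet (i, false)
    rw [key i, ← inv_pow]
    have hinv : (FreeGroup.mk [(i, true)])⁻¹ = FreeGroup.mk [(i, false)] := by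
      rw [← of_eq_mk, inv_of_eq_mk]
    rw [hinv]
    have hw' : w ∉ headSet (i, !false) := hw
    exact pow_mul_mem_headSet (i, false) _ (by cases i <;> norm_num) hw'


section Stabs
variable {Γ E : Type*} [Group Γ] [NormedAddCommGroup E] [NormedSpace ℝ E]

lemma cocycle_one (ρ : Γ →* (E ≃ₗᵢ[ℝ] E)) (G : Γ → E)
    (hG : ∀ g g' : Γ, G (g * g') = G g + ρ g (G g')) : G 1 = 0 := by
  have h := hG 1 1
  simp only [mul_one, map_one, LinearIsometryEquiv.coe_one, id_eq] at h
  have h2 : G 1 + G 1 = G 1 + 0 := by rw [add_zero]; exact h.symm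
  exact add_left_cancel h2

def affineStab (ρ : Γ →* (E ≃ₗᵢ[ℝ] E)) (G : Γ → E)
    (hG : ∀ g g' : Γ, G (g * g') = G g + ρ g (G g')) (x : E) : Subgroup Γ where
  carrier := {g | ρ g x + G g = x}
  one_mem' := by
    show ρ 1 x + G 1 = x
    rw [cocycle_one ρ G hG, map_one]
    simp
  mul_mem' := by
    intro a b ha hb
    have ha' : ρ a x + G a = x := ha
    have hb' : ρ b x + G b = x := hb
    show ρ (a * b) x + G (a * b) = x
    rw [hG a b, map_mul]
    have h1 : (ρ a * ρ b) x = ρ a (ρ b x) := rfl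
    rw [h1]
    have h2 : ρ a (ρ b x) + (G a + ρ a (G b)) = ρ a (ρ b x + G b) + G a := by
      rw [map_add]; abel
    rw [h2, hb', ha']
  inv_mem' := by
    intro a ha
    have ha' : ρ a x + G a = x := ha
    show ρ a⁻¹ x + G a⁻¹ = x
    have hGinv : G a⁻¹ + ρ a⁻¹ (G a) = 0 := by
      have := hG a⁻¹ a
      rw [inv_mul_cancel, cocycle_one ρ G hG] at this
      exact this.symm
    have hfix : ρ a⁻¹ (ρ a x) = x := by
      have : ρ a⁻¹ (ρ a x) = (ρ a⁻¹ * ρ a) x := rfl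
      rw [this, ← map_mul, inv_mul_cancel, map_one]
      simp
    have : ρ a⁻¹ x = ρ a⁻¹ (ρ a x) + ρ a⁻¹ (G a) := by
      rw [← map_add, ha']
    rw [this, hfix]
    have : x + ρ a⁻¹ (G a) + G a⁻¹ = x + (G a⁻¹ + ρ a⁻¹ (G a)) := by abel
    rw [this, hGinv, add_zero]

def linStab (ρ : Γ →* (E ≃ₗᵢ[ℝ] E)) (e : E) : Subgroup Γ where
  carrier := {g | ρ g e = e}
  one_mem' := by show ρ 1 e = e; rw [map_one]; simp
  mul_mem' := by
    intro a b ha hb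
    have ha' : ρ a e = e := ha
    have hb' : ρ b e = e := hb
    show ρ (a * b) e = e
    rw [map_mul]
    have h1 : (ρ a * ρ b) e = ρ a (ρ b e) := rfl
    rw [h1, hb', ha']
  inv_mem' := by
    intro a ha
    have ha' : ρ a e = e := ha
    show ρ a⁻¹ e = e
    conv_lhs => rw [← ha']
    have : ρ a⁻¹ (ρ a e) = (ρ a⁻¹ * ρ a) e := rfl
    rw [this, ← map_mul, inv_mul_cancel, map_one]
    simp

end Stabs

/-- a cocycle for a unitary representation of F₂ on a uniformly convex
real Banach space that is bounded on the subgroups ⟨a²,b⟩ and ⟨a³,b⟩ is either bounded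
on all of F₂, or else some rank-two free subgroup F of F₂ has a nonzero ρ(F)-fixed
vector. -/
theorem stmt6 {E : Type*} [NormedAddCommGroup E] [NormedSpace ℝ E]
    [CompleteSpace E] [UniformConvexSpace E]
    (ρ : F2 →* (E ≃ₗᵢ[ℝ] E)) (G : F2 → E) (hG : IsCocycle ρ G)
    (h2 : ∃ C : ℝ, ∀ g ∈ Subgroup.closure {fa ^ 2, fb}, ‖G g‖ ≤ C)
    (h3 : ∃ C : ℝ, ∀ g ∈ Subgroup.closure {fa ^ 3, fb}, ‖G g‖ ≤ C) :
    (∃ C : ℝ, ∀ g : F2, ‖G g‖ ≤ C) ∨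
    (∃ F : Subgroup F2, IsRankTwoFree F ∧
      ∃ e : E, e ≠ 0 ∧ ∀ h ∈ F, ρ h e = e) := by
  classical
  obtain ⟨C2, hC2⟩ := h2
  obtain ⟨C3, hC3⟩ := h3
  have hG' : ∀ g g' : F2, G (g * g') = G g + ρ g (G g') := hG
  obtain ⟨x2, hx2⟩ := exists_affine_fixed ρ G hG' (Subgroup.closure {fa ^ 2, fb}) hC2
  obtain ⟨x3, hx3⟩ := exists_affine_fixed ρ G hG' (Subgroup.closure {fa ^ 3, fb}) hC3
  have ha2 : fa ^ 2 ∈ Subgroup.closure ({fa ^ 2, fb} : Set F2) :=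
    Subgroup.subset_closure (Set.mem_insert _ _)
  have hb2 : fb ∈ Subgroup.closure ({fa ^ 2, fb} : Set F2) :=
    Subgroup.subset_closure (Set.mem_insert_of_mem _ rfl)
  have ha3 : fa ^ 3 ∈ Subgroup.closure ({fa ^ 3, fb} : Set F2) :=
    Subgroup.subset_closure (Set.mem_insert _ _)
  have hb3 : fb ∈ Subgroup.closure ({fa ^ 3, fb} : Set F2) :=
    Subgroup.subset_closure (Set.mem_insert_of_mem _ rfl)
  have ha6_2 : fa ^ 6 ∈ Subgroup.closure ({fa ^ 2, fb} : Set F2) := by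
    have := pow_mem ha2 3
    rwa [← pow_mul] at this
  have ha6_3 : fa ^ 6 ∈ Subgroup.closure ({fa ^ 3, fb} : Set F2) := by
    have := pow_mem ha3 2
    rwa [← pow_mul] at this
  by_cases hv : x2 - x3 = 0
  · left
    have hx23 : x2 = x3 := sub_eq_zero.mp hv
    set K := affineStab ρ G hG' x2 with hK
    have hfa2 : fa ^ 2 ∈ K := hx2 _ ha2
    have hfb : fb ∈ K := hx2 _ hb2
    have hfa3 : fa ^ 3 ∈ K := by
      show ρ (fa ^ 3) x2 + G (fa ^ 3) = x2
      rw [hx23]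
      exact hx3 _ ha3
    have hfa : fa ∈ K := by
      have hmem := K.mul_mem hfa3 (K.inv_mem hfa2)
      have heq : fa ^ 3 * (fa ^ 2)⁻¹ = fa := by group
      rwa [heq] at hmem
    have hall : ∀ g : F2, g ∈ K := by
      intro g
      refine FreeGroup.induction_on g K.one_mem (fun t => ?_) (fun t h => K.inv_mem h)
        (fun u v hu hv => K.mul_mem hu hv)
      cases t
      · exact hfb
      · exact hfa
    refine ⟨2 * ‖x2‖, fun g => ?_⟩
    have hgK : ρ g x2 + G g = x2 := hall g
    have hGg : G g = x2 - ρ g x2 := eq_sub_of_add_eq (by rw [add_comm]; exact hgK)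
    rw [hGg]
    calc ‖x2 - ρ g x2‖ ≤ ‖x2‖ + ‖ρ g x2‖ := norm_sub_le _ _
      _ = 2 * ‖x2‖ := by rw [LinearIsometryEquiv.norm_map]; ring
  · right
    refine ⟨Subgroup.closure {fa ^ 6, fb}, ⟨fa ^ 6, fb, rfl, inj6⟩, x2 - x3, hv, ?_⟩
    have hgen : ∀ h : F2, h ∈ Subgroup.closure ({fa ^ 2, fb} : Set F2) →
        h ∈ Subgroup.closure ({fa ^ 3, fb} : Set F2) → ρ h (x2 - x3) = x2 - x3 := by
      intro h hh2 hh3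
      have e2 : ρ h x2 = x2 - G h := eq_sub_of_add_eq (hx2 _ hh2)
      have e3 : ρ h x3 = x3 - G h := eq_sub_of_add_eq (hx3 _ hh3)
      rw [map_sub, e2, e3]
      abel
    have hle : Subgroup.closure ({fa ^ 6, fb} : Set F2) ≤ linStab ρ (x2 - x3) := by
      rw [Subgroup.closure_le]
      intro g hg
      rcases hg with rfl | rfl
      · exact hgen _ ha6_2 ha6_3
      · exact hgen _ hb2 hb3
    intro h hh
    exact hle hh
end

section
/- Let ρ be a unitary representation of a group G on a normed real vector space E and let K be a finite normal subgroup of G. Define π : E → E by π(x) = |K|⁻¹ Σ_{k∈K} ρ(k)x; the image of π lies in the subspace E' of ρ(K)-invariant vectors, and π commutes with ρ(g) for every g ∈ G. Then for every quasi-cocycle H : G → E, the composition π∘H is a quasi-cocycle taking values in E', it satisfies sup_{g∈G} ‖H(g) − π(H(g))‖ < ∞, and if H is a cocycle then π∘H is a cocycle. -/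
open scoped BigOperators

/-- The averaging projection π(x) = |K|⁻¹ Σ_{k∈K} ρ(k)x over a finite subgroup K. -/
noncomputable def avgProj {G E : Type*} [Group G] [NormedAddCommGroup E]
    [NormedSpace ℝ E] (ρ : G →* (E ≃ₗᵢ[ℝ] E)) (K : Subgroup G) [Fintype K]
    (x : E) : E :=
  (Nat.card K : ℝ)⁻¹ • ∑ k : K, ρ (k : G) x

section aux
variable {G E : Type*} [Group G] [NormedAddCommGroup E] [NormedSpace ℝ E]
  (ρ : G →* (E ≃ₗᵢ[ℝ] E)) (K : Subgroup G) [Fintype K]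

lemma card_pos' : (0:ℝ) < (Nat.card K : ℝ) := by
  have : 0 < Nat.card K := Nat.card_pos
  exact_mod_cast this

lemma avgProj_sub (x y : E) :
    avgProj ρ K (x - y) = avgProj ρ K x - avgProj ρ K y := by
  simp [avgProj, map_sub, Finset.sum_sub_distrib, smul_sub]

lemma avgProj_add (x y : E) :
    avgProj ρ K (x + y) = avgProj ρ K x + avgProj ρ K y := by
  simp [avgProj, map_add, Finset.sum_add_distrib, smul_add]

lemma norm_avgProj_le (x : E) : ‖avgProj ρ K x‖ ≤ ‖x‖ := by
  have hpos := card_pos' (K := K)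
  rw [avgProj, norm_smul]
  have h1 : ‖∑ k : K, ρ (k : G) x‖ ≤ (Nat.card K : ℝ) * ‖x‖ := by
    calc ‖∑ k : K, ρ (k : G) x‖ ≤ ∑ k : K, ‖ρ (k : G) x‖ := norm_sum_le _ _
    _ = ∑ _k : K, ‖x‖ := by simp
    _ = (Nat.card K : ℝ) * ‖x‖ := by
        rw [Finset.sum_const, Finset.card_univ, Nat.card_eq_fintype_card]
        simp [nsmul_eq_mul]
  calc ‖((Nat.card K : ℝ)⁻¹)‖ * ‖∑ k : K, ρ (k : G) x‖
      ≤ (Nat.card K : ℝ)⁻¹ * ((Nat.card K : ℝ) * ‖x‖) := by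
        rw [Real.norm_eq_abs, abs_of_pos (by positivity)]
        exact mul_le_mul_of_nonneg_left h1 (by positivity)
    _ = ‖x‖ := by field_simp

lemma avgProj_inv (x : E) {k : G} (hk : k ∈ K) :
    ρ k (avgProj ρ K x) = avgProj ρ K x := by
  rw [avgProj, map_smul, map_sum]
  congr 1
  have : ∀ j : K, ρ k (ρ (j : G) x) = ρ ((⟨k, hk⟩ * j : K) : G) x := by
    intro j
    simp [map_mul]
  rw [Fintype.sum_congr _ _ this]
  exact Fintype.sum_equiv (Equiv.mulLeft (⟨k, hk⟩ : K)) _ _ (fun j => rfl)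

lemma avgProj_comm (hK : K.Normal) (g : G) (x : E) :
    avgProj ρ K (ρ g x) = ρ g (avgProj ρ K x) := by
  rw [avgProj, avgProj, map_smul, map_sum]
  congr 1
  let e : K ≃ K :=
    { toFun := fun k => ⟨g⁻¹ * (k : G) * g, by
        have := hK.conj_mem (k : G) k.2 g⁻¹; simpa using this⟩
      invFun := fun k => ⟨g * (k : G) * g⁻¹, hK.conj_mem (k : G) k.2 g⟩
      left_inv := fun k => Subtype.ext (by group)
      right_inv := fun k => Subtype.ext (by group) }
  refine Fintype.sum_equiv e _ _ (fun k => ?_)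
  show ρ ((k : G)) (ρ g x) = ρ g (ρ (g⁻¹ * (k : G) * g) x)
  have h1 : (↑k : G) * g = g * (g⁻¹ * (k : G) * g) := by group
  calc ρ ((k : G)) (ρ g x) = ρ ((k : G) * g) x := by rw [map_mul]; rfl
    _ = ρ (g * (g⁻¹ * (k : G) * g)) x := by rw [h1]
    _ = ρ g (ρ (g⁻¹ * (k : G) * g) x) := by rw [map_mul]; rfl

end aux

/-- for a finite normal subgroup K, the averaging projection π takes
values in the subspace of ρ(K)-invariant vectors and commutes with every ρ(g); for
every quasi-cocycle H the map π∘H is a quasi-cocycle into that subspace at uniformly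
bounded distance from H, and π∘H is a cocycle whenever H is. -/
theorem stmt9 {G E : Type*} [Group G] [NormedAddCommGroup E] [NormedSpace ℝ E]
    (ρ : G →* (E ≃ₗᵢ[ℝ] E)) (K : Subgroup G) [Fintype K] (hK : K.Normal) :
    (∀ x : E, ∀ k ∈ K, ρ k (avgProj ρ K x) = avgProj ρ K x) ∧
    (∀ (g : G) (x : E), avgProj ρ K (ρ g x) = ρ g (avgProj ρ K x)) ∧
    ∀ H : G → E, IsQuasiCocycle ρ H →
      IsQuasiCocycle ρ (fun g => avgProj ρ K (H g)) ∧
      (∃ C : ℝ, ∀ g : G, ‖H g - avgProj ρ K (H g)‖ ≤ C) ∧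
      (IsCocycle ρ H → IsCocycle ρ (fun g => avgProj ρ K (H g))) := by
  refine ⟨fun x k hk => avgProj_inv ρ K x hk, fun g x => avgProj_comm ρ K hK g x,
    fun H hH => ?_⟩
  obtain ⟨C, hC⟩ := hH
  have hC0 : 0 ≤ C := le_trans (norm_nonneg _) (hC 1 1)
  refine ⟨⟨C, fun g g' => ?_⟩, ?_, fun hco g g' => ?_⟩
  · calc ‖avgProj ρ K (H (g * g')) - avgProj ρ K (H g) - ρ g (avgProj ρ K (H g'))‖
        = ‖avgProj ρ K (H (g * g') - H g - ρ g (H g'))‖ := by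
          rw [avgProj_sub, avgProj_sub, avgProj_comm ρ K hK]
      _ ≤ ‖H (g * g') - H g - ρ g (H g')‖ := norm_avgProj_le ρ K _
      _ ≤ C := hC g g'
  · -- bounded distance
    set M : ℝ := ∑ k : K, ‖H (k : G)‖ with hM
    have hM0 : 0 ≤ M := Finset.sum_nonneg fun _ _ => norm_nonneg _
    have hMk : ∀ k : K, ‖H (k : G)‖ ≤ M := fun k =>
      Finset.single_le_sum (f := fun k : K => ‖H (k : G)‖)
        (fun _ _ => norm_nonneg _) (Finset.mem_univ k)
    refine ⟨2*C + 2*M, fun g => ?_⟩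
    have key : ∀ k : K, ‖H g - ρ (k : G) (H g)‖ ≤ 2*C + 2*M := by
      intro k
      have h1 : ‖H ((k : G) * g) - H (k : G) - ρ (k : G) (H g)‖ ≤ C := hC _ _
      have hmem : g⁻¹ * (k : G) * g ∈ K := by
        have := hK.conj_mem (k : G) k.2 g⁻¹; simpa using this
      have h2 : ‖H (g * (g⁻¹ * (k : G) * g)) - H g - ρ g (H (g⁻¹ * (k : G) * g))‖ ≤ C :=
        hC _ _
      have heq : g * (g⁻¹ * (k : G) * g) = (k : G) * g := by group
      rw [heq] at h2
      have h3 : ‖H ((k : G) * g) - H g‖ ≤ C + M := by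
        calc ‖H ((k : G) * g) - H g‖
            ≤ ‖H ((k : G) * g) - H g - ρ g (H (g⁻¹ * (k : G) * g))‖
              + ‖ρ g (H (g⁻¹ * (k : G) * g))‖ := by
              have := norm_add_le (H ((k : G) * g) - H g - ρ g (H (g⁻¹ * (k : G) * g)))
                (ρ g (H (g⁻¹ * (k : G) * g)))
              simpa using this
          _ ≤ C + M := by
              have : ‖ρ g (H (g⁻¹ * (k : G) * g))‖ = ‖H (g⁻¹ * (k : G) * g)‖ := by simp
              rw [this]
              exact add_le_add h2 (hMk ⟨_, hmem⟩)
      have h4 : ‖H ((k : G) * g) - ρ (k : G) (H g)‖ ≤ C + M := by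
        calc ‖H ((k : G) * g) - ρ (k : G) (H g)‖
            = ‖(H ((k : G) * g) - H (k : G) - ρ (k : G) (H g)) + H (k : G)‖ := by
              congr 1; abel
          _ ≤ C + M := le_trans (norm_add_le _ _) (add_le_add h1 (hMk k))
      calc ‖H g - ρ (k : G) (H g)‖
          = ‖(H g - H ((k : G) * g)) + (H ((k : G) * g) - ρ (k : G) (H g))‖ := by
            congr 1; abel
        _ ≤ ‖H g - H ((k : G) * g)‖ + ‖H ((k : G) * g) - ρ (k : G) (H g)‖ :=
            norm_add_le _ _
        _ ≤ (C + M) + (C + M) := by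
            refine add_le_add ?_ h4
            rw [norm_sub_rev]; exact h3
        _ = 2*C + 2*M := by ring
    have hpos := card_pos' (K := K)
    have hrw : H g - avgProj ρ K (H g)
        = (Nat.card K : ℝ)⁻¹ • ∑ k : K, (H g - ρ (k : G) (H g)) := by
      rw [avgProj, Finset.sum_sub_distrib, smul_sub]
      congr 1
      rw [Finset.sum_const, Finset.card_univ, Nat.card_eq_fintype_card,
        ← Nat.cast_smul_eq_nsmul ℝ, smul_smul,
        inv_mul_cancel₀ (Nat.cast_ne_zero.2 Fintype.card_ne_zero), one_smul]
    rw [hrw, norm_smul, Real.norm_eq_abs, abs_of_pos (by positivity)]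
    calc (Nat.card K : ℝ)⁻¹ * ‖∑ k : K, (H g - ρ (k : G) (H g))‖
        ≤ (Nat.card K : ℝ)⁻¹ * ∑ k : K, (2*C + 2*M) := by
          refine mul_le_mul_of_nonneg_left ?_ (by positivity)
          exact le_trans (norm_sum_le _ _) (Finset.sum_le_sum fun k _ => key k)
      _ = 2*C + 2*M := by
          rw [Finset.sum_const, Finset.card_univ, ← Nat.card_eq_fintype_card]
          rw [nsmul_eq_mul]
          field_simp
  · show avgProj ρ K (H (g * g')) = avgProj ρ K (H g) + ρ g (avgProj ρ K (H g'))
    rw [hco g g', avgProj_add, avgProj_comm ρ K hK]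
end

section
/- Let ρ be a unitary representation of a group G on a normed real vector space E, let K be a finite normal subgroup of G, let E' ⊆ E be the subspace of ρ(K)-invariant vectors, and let ρ' be the unitary representation of G on E' obtained by restricting ρ. Then the natural map ~QC(G;ρ') → ~QC(G;ρ), sending the class of a quasi-cocycle H' : G → E' to its class as a quasi-cocycle into E, is a linear isomorphism. -/
open scoped BigOperators

/-- A uniformly bounded family of vectors. -/
def IsBdd {X E : Type*} [NormedAddCommGroup E] (B : X → E) : Prop :=
  ∃ M : ℝ, ∀ x : X, ‖B x‖ ≤ M

/-- `H` represents the zero class in ~QC(G;ρ), i.e. it lies in the span of bounded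
functions and cocycles (equivalently it is a bounded perturbation of a cocycle). -/
def IsTrivialClass {G E : Type*} [Group G] [NormedAddCommGroup E] [NormedSpace ℝ E]
    (ρ : G →* (E ≃ₗᵢ[ℝ] E)) (H : G → E) : Prop :=
  ∃ B C : G → E, IsBdd B ∧ IsCocycle ρ C ∧ H = B + C

section Helpers
variable {G E : Type*} [Group G] [NormedAddCommGroup E] [NormedSpace ℝ E]

noncomputable def avgK (ρ : G →* (E ≃ₗᵢ[ℝ] E)) (K : Subgroup G) [Fintype K] (x : E) : E :=
  (Fintype.card K : ℝ)⁻¹ • ∑ k : K, ρ (k : G) x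

variable (ρ : G →* (E ≃ₗᵢ[ℝ] E)) (K : Subgroup G) [Fintype K]

lemma avgK_sub (x y : E) : avgK ρ K (x - y) = avgK ρ K x - avgK ρ K y := by
  simp [avgK, map_sub, Finset.sum_sub_distrib, smul_sub]

lemma avgK_add (x y : E) : avgK ρ K (x + y) = avgK ρ K x + avgK ρ K y := by
  simp [avgK, map_add, Finset.sum_add_distrib, smul_add]

lemma avgK_fix (k₀ : K) (x : E) : ρ (k₀ : G) (avgK ρ K x) = avgK ρ K x := by
  rw [avgK, map_smul, map_sum]
  congr 1
  refine Fintype.sum_equiv (Equiv.mulLeft k₀) _ _ ?_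
  intro k
  simp [Equiv.coe_mulLeft, Subgroup.coe_mul, map_mul, LinearIsometryEquiv.coe_mul,
    Function.comp]

lemma avgK_comm (hK : K.Normal) (g : G) (x : E) :
    ρ g (avgK ρ K x) = avgK ρ K (ρ g x) := by
  haveI := hK
  rw [avgK, avgK, map_smul, map_sum]
  congr 1
  refine Fintype.sum_equiv (MulAut.conjNormal g).toEquiv _ _ ?_
  intro k
  have h1 : ρ g (ρ (k : G) x) = ρ (g * (k : G)) x := by
    simp [map_mul, LinearIsometryEquiv.coe_mul, Function.comp]
  have h2 : ρ ((MulAut.conjNormal g k : K) : G) (ρ g x)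
      = ρ ((g * (k : G) * g⁻¹) * g) x := by
    simp [map_mul, LinearIsometryEquiv.coe_mul, Function.comp]
  show ρ g (ρ (k : G) x) = ρ ((MulAut.conjNormal g k : K) : G) (ρ g x)
  rw [h1, h2]
  congr 1
  group

lemma avgK_of_fixed {x : E} (h : ∀ k : K, ρ (k : G) x = x) : avgK ρ K x = x := by
  have hc : (Fintype.card K : ℝ) ≠ 0 := Nat.cast_ne_zero.mpr Fintype.card_ne_zero
  rw [avgK]
  simp only [h, Finset.sum_const, Finset.card_univ]
  rw [← Nat.cast_smul_eq_nsmul ℝ, smul_smul, inv_mul_cancel₀ hc, one_smul]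

lemma avgK_dist_le {x : E} {D : ℝ} (h : ∀ k : K, ‖ρ (k : G) x - x‖ ≤ D) :
    ‖avgK ρ K x - x‖ ≤ D := by
  have hc : (0 : ℝ) < (Fintype.card K : ℝ) := by
    exact_mod_cast Fintype.card_pos
  have hx : avgK ρ K x - x = (Fintype.card K : ℝ)⁻¹ • ∑ k : K, (ρ (k : G) x - x) := by
    rw [Finset.sum_sub_distrib, smul_sub, avgK]
    congr 1
    simp only [Finset.sum_const, Finset.card_univ]
    rw [← Nat.cast_smul_eq_nsmul ℝ, smul_smul, inv_mul_cancel₀ hc.ne', one_smul]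
  rw [hx, norm_smul, norm_inv, Real.norm_natCast]
  calc (Fintype.card K : ℝ)⁻¹ * ‖∑ k : K, (ρ (k : G) x - x)‖
      ≤ (Fintype.card K : ℝ)⁻¹ * (Fintype.card K * D) := by
        refine mul_le_mul_of_nonneg_left ?_ (by positivity)
        calc ‖∑ k : K, (ρ (k : G) x - x)‖ ≤ ∑ k : K, ‖ρ (k : G) x - x‖ :=
              norm_sum_le _ _
          _ ≤ ∑ _k : K, D := Finset.sum_le_sum fun k _ => h k
          _ = Fintype.card K * D := by simp [Finset.sum_const, mul_comm]
    _ = D := by field_simp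

lemma avgK_norm_le (x : E) : ‖avgK ρ K x‖ ≤ ‖x‖ := by
  have hc : (0 : ℝ) < (Fintype.card K : ℝ) := by exact_mod_cast Fintype.card_pos
  rw [avgK, norm_smul, norm_inv, Real.norm_natCast]
  calc (Fintype.card K : ℝ)⁻¹ * ‖∑ k : K, ρ (k : G) x‖
      ≤ (Fintype.card K : ℝ)⁻¹ * (Fintype.card K * ‖x‖) := by
        refine mul_le_mul_of_nonneg_left ?_ (by positivity)
        calc ‖∑ k : K, ρ (k : G) x‖ ≤ ∑ k : K, ‖ρ (k : G) x‖ := norm_sum_le _ _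
          _ = ∑ _k : K, ‖x‖ := by simp
          _ = Fintype.card K * ‖x‖ := by simp [Finset.sum_const, mul_comm]
    _ = ‖x‖ := by field_simp

end Helpers

/-- for a finite normal subgroup K of G, with E' the subspace of
ρ(K)-invariant vectors and ρ' the restriction of ρ to E', the natural map
~QC(G;ρ') → ~QC(G;ρ) (induced by postcomposing quasi-cocycles with E' ↪ E) is a
linear isomorphism; stated elementarily as injectivity and surjectivity of the
induced map on classes (linearity being automatic). -/
theorem stmt10 {G E : Type*} [Group G] [NormedAddCommGroup E] [NormedSpace ℝ E]
    (ρ : G →* (E ≃ₗᵢ[ℝ] E)) (K : Subgroup G) [Fintype K] (hK : K.Normal)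
    (E' : Submodule ℝ E) (hE' : ∀ x : E, x ∈ E' ↔ ∀ k ∈ K, ρ k x = x)
    (ρ' : G →* (E' ≃ₗᵢ[ℝ] E')) (hρ' : ∀ (g : G) (x : E'), ((ρ' g x : E') : E) = ρ g (x : E)) :
    -- injectivity of the induced map on ~QC
    (∀ H' : G → E', IsQuasiCocycle ρ' H' →
        IsTrivialClass ρ (fun g => (H' g : E)) → IsTrivialClass ρ' H') ∧
    -- surjectivity of the induced map on ~QC
    (∀ H : G → E, IsQuasiCocycle ρ H →
        ∃ H' : G → E', IsQuasiCocycle ρ' H' ∧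
          IsTrivialClass ρ ((fun g => (H' g : E)) - H)) := by
  have memE' : ∀ x : E, avgK ρ K x ∈ E' := fun x =>
    (hE' _).mpr (fun k hk => avgK_fix ρ K ⟨k, hk⟩ x)
  constructor
  · -- injectivity
    rintro H' _ ⟨B, C, ⟨M, hM⟩, hC, hBC⟩
    set C' : G → E' := fun g => ⟨avgK ρ K (C g), memE' _⟩ with hC'def
    refine ⟨H' - C', C', ⟨M, ?_⟩, ?_, by funext g; simp⟩
    · intro g
      have hHg : avgK ρ K ((H' g : E)) = (H' g : E) :=
        avgK_of_fixed ρ K (fun k => (hE' _).mp (H' g).2 (k : G) k.2)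
      have hsplit : (H' g : E) = B g + C g := by
        have := congrFun hBC g
        simpa using this
      have hveq : (H' g : E) - avgK ρ K (C g) = avgK ρ K (B g) := by
        have : avgK ρ K ((H' g : E)) = avgK ρ K (B g) + avgK ρ K (C g) := by
          rw [hsplit, avgK_add]
        rw [hHg] at this
        rw [this]; abel
      have : ‖((H' - C') g : E)‖ ≤ M := by
        have hco : ((H' - C') g : E) = (H' g : E) - avgK ρ K (C g) := by
          simp [hC'def]
        rw [hco, hveq]
        exact (avgK_norm_le ρ K _).trans (hM g)
      simpa [Submodule.norm_coe] using this
    · intro g g'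
      apply Subtype.ext
      have : avgK ρ K (C (g * g')) = avgK ρ K (C g) + ρ g (avgK ρ K (C g')) := by
        rw [hC g g', avgK_add, avgK_comm ρ K hK]
      simpa [hC'def, hρ'] using this
  · -- surjectivity
    rintro H ⟨C0, hC0⟩
    set M : ℝ := ∑ k : K, ‖H (k : G)‖ with hMdef
    have hMk : ∀ k : K, ‖H (k : G)‖ ≤ M := fun k =>
      Finset.single_le_sum (f := fun k : K => ‖H (k : G)‖)
        (fun _ _ => norm_nonneg _) (Finset.mem_univ k)
    have key : ∀ (g : G) (k' : K), ‖ρ (k' : G) (H g) - H g‖ ≤ 2 * C0 + 2 * M := by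
      intro g k'
      have hkmem : g⁻¹ * (k' : G) * g ∈ K := by
        have := hK.conj_mem (k' : G) k'.2 g⁻¹
        simpa using this
      set k : K := ⟨g⁻¹ * (k' : G) * g, hkmem⟩ with hkdef
      have hgk : (k' : G) * g = g * (k : G) := by
        simp only [hkdef]
        group
      have hid : ρ (k' : G) (H g) - H g =
          (H (g * (k : G)) - H g - ρ g (H (k : G)))
          - (H ((k' : G) * g) - H (k' : G) - ρ (k' : G) (H g))
          + ρ g (H (k : G)) - H (k' : G) := by
        rw [hgk]; abel
      rw [hid]
      have n1 := hC0 g (k : G)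
      have n2 := hC0 (k' : G) g
      have n3 : ‖ρ g (H (k : G))‖ = ‖H (k : G)‖ := (ρ g).norm_map _
      set A := H (g * (k : G)) - H g - ρ g (H (k : G)) with hA
      set Bv := H ((k' : G) * g) - H (k' : G) - ρ (k' : G) (H g) with hB
      calc ‖A - Bv + ρ g (H (k : G)) - H (k' : G)‖
          ≤ ‖A - Bv + ρ g (H (k : G))‖ + ‖H (k' : G)‖ := norm_sub_le _ _
        _ ≤ (‖A - Bv‖ + ‖ρ g (H (k : G))‖) + ‖H (k' : G)‖ := by
            gcongr; exact norm_add_le _ _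
        _ ≤ ((‖A‖ + ‖Bv‖) + ‖ρ g (H (k : G))‖) + ‖H (k' : G)‖ := by
            gcongr; exact norm_sub_le _ _
        _ ≤ 2 * C0 + 2 * M := by
            rw [n3]
            have := hMk k
            have := hMk k'
            linarith
    refine ⟨fun g => ⟨avgK ρ K (H g), memE' _⟩, ⟨C0, ?_⟩, ?_⟩
    · intro g g'
      have hco : avgK ρ K (H (g * g')) - avgK ρ K (H g) - ρ g (avgK ρ K (H g'))
          = avgK ρ K (H (g * g') - H g - ρ g (H g')) := by
        rw [avgK_sub, avgK_sub, avgK_comm ρ K hK]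
      have : ‖avgK ρ K (H (g * g')) - avgK ρ K (H g) - ρ g (avgK ρ K (H g'))‖ ≤ C0 := by
        rw [hco]
        exact (avgK_norm_le ρ K _).trans (hC0 g g')
      have hgoal : ‖(⟨avgK ρ K (H (g * g')), memE' _⟩ : E')
          - ⟨avgK ρ K (H g), memE' _⟩
          - ρ' g ⟨avgK ρ K (H g'), memE' _⟩‖
          ≤ C0 := by
        rw [← Submodule.norm_coe]
        simpa [hρ'] using this
      exact hgoal
    · refine ⟨(fun g => (avgK ρ K (H g) : E)) - H, 0, ⟨2 * C0 + 2 * M, ?_⟩, ?_, by simp⟩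
      · intro g
        simpa using avgK_dist_le ρ K (fun k' => key g k')
      · intro g g'
        simp
end

section
/- Let G be any group, let ℓ∞(G) be the Banach space of bounded real-valued functions on G with the supremum norm, and let ρ be the regular representation, (ρ(g)f)(x) = f(g⁻¹x). For any quasi-cocycle H : G → ℓ∞(G) with defect Δ(H), define H₀ : G → ℓ∞(G) by H₀(g)(x) = H(x)(x) − H(g⁻¹x)(g⁻¹x). Then H₀ is a cocycle and sup_{g∈G} ‖H(g) − H₀(g)‖_∞ ≤ Δ(H). Consequently every quasi-cocycle for the regular representation on ℓ∞(G) is within uniformly bounded distance of a cocycle, i.e. ~QC(G; ℓ∞(G)) = 0. -/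
open scoped BigOperators ENNReal

/-- for the regular representation of any group G on ℓ∞(G), every
quasi-cocycle H with defect bound Δ admits the explicit cocycle
H₀(g)(x) = H(x)(x) − H(g⁻¹x)(g⁻¹x) with sup_g ‖H(g) − H₀(g)‖∞ ≤ Δ; consequently every
quasi-cocycle is within uniformly bounded distance of a cocycle, i.e.
~QC(G;ℓ∞(G)) = 0. -/
theorem stmt12 {G : Type*} [Group G]
    (ρ : G →* (lp (fun _ : G => ℝ) ∞ ≃ₗᵢ[ℝ] lp (fun _ : G => ℝ) ∞))
    (hρ : ∀ (g : G) (f : lp (fun _ : G => ℝ) ∞) (x : G), (ρ g f) x = f (g⁻¹ * x)) :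
    (∀ (H : G → lp (fun _ : G => ℝ) ∞) (Δ : ℝ),
      (∀ g g' : G, ‖H (g * g') - H g - ρ g (H g')‖ ≤ Δ) →
      ∃ H₀ : G → lp (fun _ : G => ℝ) ∞,
        (∀ g x : G, (H₀ g) x = (H x) x - (H (g⁻¹ * x)) (g⁻¹ * x)) ∧
        IsCocycle ρ H₀ ∧ ∀ g : G, ‖H g - H₀ g‖ ≤ Δ) ∧
    (∀ H : G → lp (fun _ : G => ℝ) ∞, IsQuasiCocycle ρ H →
      ∃ H₀ : G → lp (fun _ : G => ℝ) ∞, IsCocycle ρ H₀ ∧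
        ∃ C : ℝ, ∀ g : G, ‖H g - H₀ g‖ ≤ C) := by
  have main : ∀ (H : G → lp (fun _ : G => ℝ) ∞) (Δ : ℝ),
      (∀ g g' : G, ‖H (g * g') - H g - ρ g (H g')‖ ≤ Δ) →
      ∃ H₀ : G → lp (fun _ : G => ℝ) ∞,
        (∀ g x : G, (H₀ g) x = (H x) x - (H (g⁻¹ * x)) (g⁻¹ * x)) ∧
        IsCocycle ρ H₀ ∧ ∀ g : G, ‖H g - H₀ g‖ ≤ Δ := by
    intro H Δ hΔ
    have hΔ0 : 0 ≤ Δ := le_trans (norm_nonneg _) (hΔ 1 1)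
    -- key pointwise bound
    have key : ∀ g x : G, |(H x) x - (H (g⁻¹ * x)) (g⁻¹ * x) - (H g) x| ≤ Δ := by
      intro g x
      have h1 := hΔ g (g⁻¹ * x)
      have h2 : ‖(H (g * (g⁻¹ * x)) - H g - ρ g (H (g⁻¹ * x))) x‖ ≤ Δ :=
        le_trans (lp.norm_apply_le_norm (by norm_num) _ x) h1
      have h3 : (H (g * (g⁻¹ * x)) - H g - ρ g (H (g⁻¹ * x))) x
          = (H x) x - (H g) x - (H (g⁻¹ * x)) (g⁻¹ * x) := by
        simp [lp.coeFn_sub, hρ, mul_inv_cancel_left]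
      rw [h3] at h2
      rw [Real.norm_eq_abs] at h2
      have : (H x) x - (H (g⁻¹ * x)) (g⁻¹ * x) - (H g) x
          = (H x) x - (H g) x - (H (g⁻¹ * x)) (g⁻¹ * x) := by ring
      rw [this]; exact h2
    set f : G → G → ℝ := fun g x => (H x) x - (H (g⁻¹ * x)) (g⁻¹ * x) with hf
    have hmem : ∀ g : G, Memℓp (f g) ∞ := by
      intro g
      apply memℓp_infty
      refine ⟨Δ + ‖H g‖, ?_⟩
      rintro r ⟨x, rfl⟩
      have := key g x
      have h4 := lp.norm_apply_le_norm (p := ∞) (by norm_num) (H g) x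
      simp only [Real.norm_eq_abs] at h4 ⊢
      calc |f g x| = |(f g x - (H g) x) + (H g) x| := by ring_nf
        _ ≤ |f g x - (H g) x| + |(H g) x| := abs_add_le _ _
        _ ≤ Δ + ‖H g‖ := add_le_add this h4
    refine ⟨fun g => ⟨f g, hmem g⟩, fun g x => rfl, ?_, ?_⟩
    · intro g g'
      apply lp.ext
      funext x
      have hcoe : ∀ (a b : lp (fun _ : G => ℝ) ∞), (↑(a + b) : ∀ _ : G, ℝ) x = a x + b x := by
        intro a b; simp [lp.coeFn_add]
      show f (g * g') x = _
      rw [hcoe, hρ]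
      show _ = f g x + f g' (g⁻¹ * x)
      simp only [hf, mul_inv_rev, mul_assoc]
      ring
    · intro g
      apply lp.norm_le_of_forall_le hΔ0
      intro x
      have hcoe : (↑(H g - ⟨f g, hmem g⟩) : ∀ _ : G, ℝ) x = (H g) x - f g x := by
        simp [lp.coeFn_sub]
        rfl
      rw [hcoe, Real.norm_eq_abs, abs_sub_comm]
      simpa [hf] using key g x
  refine ⟨main, fun H hQ => ?_⟩
  obtain ⟨C, hC⟩ := hQ
  obtain ⟨H₀, -, hcoc, hbd⟩ := main H C hC
  exact ⟨H₀, hcoc, C, hbd⟩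
end

section
/- Let ρ be a unitary representation of F₂ = ⟨a,b⟩ on a Banach space E and let e ∈ E. Then for every n ≥ 1 the Brooks quasi-cocycle satisfies H_{ab,e}((ab)ⁿ) = (1 + ρ(ab) + ρ(ab)² + ⋯ + ρ(ab)^{n−1})e, so (1 − ρ(ab)) H_{ab,e}((ab)ⁿ) = e − ρ(ab)ⁿ e. Consequently, if the operator 1 − ρ(ab) : E → E has a continuous inverse T, then ‖H_{ab,e}((ab)ⁿ)‖ ≤ 2 ‖T‖ · ‖e‖ for all n, i.e. H_{ab,e} is bounded on the powers of ab. -/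
open scoped BigOperators

def blk : List (Bool × Bool) := [(true, true), (false, true)]

def Wn (n : ℕ) : List (Bool × Bool) := List.flatten (List.replicate n blk)

lemma Wn_succ (n : ℕ) : Wn (n+1) = (true,true) :: (false,true) :: Wn n := by
  simp [Wn, List.replicate_succ, blk]

lemma Wn_length (n : ℕ) : (Wn n).length = 2 * n := by
  induction n with
  | zero => rfl
  | succ n ih => rw [Wn_succ]; simp [ih]; ring

lemma reduce_Wn (n : ℕ) : FreeGroup.reduce (Wn n) = Wn n := by
  induction n with
  | zero => rfl
  | succ n ih =>
    rw [Wn_succ]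
    rw [FreeGroup.reduce.cons, FreeGroup.reduce.cons, ih]
    cases n with
    | zero => rfl
    | succ m => rw [Wn_succ]; simp

lemma mk_Wn (n : ℕ) : FreeGroup.mk (Wn n) = (fa * fb) ^ n := by
  have h : fa * fb = FreeGroup.mk blk := by
    show FreeGroup.mk _ * FreeGroup.mk _ = _
    rw [FreeGroup.mul_mk]; rfl
  rw [h, FreeGroup.pow_mk]; rfl

lemma toWord_pow (n : ℕ) : ((fa * fb) ^ n).toWord = Wn n := by
  rw [← mk_Wn, FreeGroup.toWord_mk, reduce_Wn]

lemma toWord_ab : (fa * fb).toWord = blk := by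
  have := toWord_pow 1
  simpa [Wn, blk] using this

lemma toWord_ab_inv : (fa * fb)⁻¹.toWord = [(false,false),(true,false)] := by
  decide

lemma Wn_add (k m : ℕ) : Wn (k + m) = Wn k ++ Wn m := by
  unfold Wn
  rw [List.replicate_add, List.flatten_append]

lemma Wn_drop (k n : ℕ) (h : k ≤ n) : (Wn n).drop (2 * k) = Wn (n - k) := by
  obtain ⟨m, rfl⟩ := Nat.exists_eq_add_of_le h
  rw [Wn_add, ← Wn_length k, List.drop_left, Nat.add_sub_cancel_left]

lemma Wn_take (k n : ℕ) (h : k ≤ n) : (Wn n).take (2 * k) = Wn k := by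
  obtain ⟨m, rfl⟩ := Nat.exists_eq_add_of_le h
  rw [Wn_add, ← Wn_length k, List.take_left]

lemma Wn_take_two (m : ℕ) : (Wn (m+1)).take 2 = blk := by
  rw [Wn_succ]; rfl

lemma Wn_snd (n : ℕ) : ∀ p ∈ Wn n, p.2 = true := by
  intro p hp
  simp only [Wn, List.mem_flatten, List.mem_replicate, blk] at hp
  obtain ⟨l, ⟨-, rfl⟩, hp⟩ := hp
  simp at hp
  rcases hp with h | h <;> simp [h]

lemma sum_even {M : Type*} [AddCommMonoid M] (f : ℕ → M)
    (hodd : ∀ k, f (2*k+1) = 0) (n : ℕ) :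
    ∑ i ∈ Finset.range (2*n), f i = ∑ k ∈ Finset.range n, f (2*k) := by
  induction n with
  | zero => simp
  | succ n ih =>
    have h2 : 2*(n+1) = (2*n)+1+1 := by ring
    rw [h2, Finset.sum_range_succ, Finset.sum_range_succ, hodd, add_zero, ih,
      Finset.sum_range_succ]

/-- for any unitary representation ρ of F₂ on a Banach space E and any
e ∈ E, the Brooks quasi-cocycle satisfies
H_{ab,e}((ab)ⁿ) = (1 + ρ(ab) + ⋯ + ρ(ab)^{n−1})e, so
(1 − ρ(ab)) H_{ab,e}((ab)ⁿ) = e − ρ(ab)ⁿ e; hence if 1 − ρ(ab) has a continuous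
inverse T then ‖H_{ab,e}((ab)ⁿ)‖ ≤ 2‖T‖‖e‖ for all n ≥ 1. -/
theorem stmt14 {E : Type*} [NormedAddCommGroup E] [NormedSpace ℝ E] [CompleteSpace E]
    (ρ : F2 →* (E ≃ₗᵢ[ℝ] E)) (e : E) :
    (∀ n : ℕ, 1 ≤ n →
      brooks ρ (fa * fb) e ((fa * fb) ^ n)
        = ∑ i ∈ Finset.range n, ρ ((fa * fb) ^ i) e) ∧
    (∀ n : ℕ, 1 ≤ n →
      brooks ρ (fa * fb) e ((fa * fb) ^ n)
          - ρ (fa * fb) (brooks ρ (fa * fb) e ((fa * fb) ^ n))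
        = e - ρ ((fa * fb) ^ n) e) ∧
    (∀ T : E →L[ℝ] E,
      (∀ x : E, T (x - ρ (fa * fb) x) = x) →
      (∀ x : E, T x - ρ (fa * fb) (T x) = x) →
      ∀ n : ℕ, 1 ≤ n →
        ‖brooks ρ (fa * fb) e ((fa * fb) ^ n)‖ ≤ 2 * ‖T‖ * ‖e‖) := by
  have hlen2 : (fa * fb).toWord.length = 2 := by rw [toWord_ab]; rfl
  have part1 : ∀ n : ℕ, 1 ≤ n →
      brooks ρ (fa * fb) e ((fa * fb) ^ n)
        = ∑ i ∈ Finset.range n, ρ ((fa * fb) ^ i) e := by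
    intro n hn
    unfold brooks
    rw [toWord_pow, hlen2, toWord_ab, toWord_ab_inv, Wn_length]
    have hneg : ∀ j ∈ Finset.range (2*n),
        (if ((Wn n).drop j).take 2 = [(false,false),(true,false)]
          then ρ (FreeGroup.mk ((Wn n).take (j + 2))) e else 0) = 0 := by
      intro j _
      rw [if_neg]
      intro h
      have hmem : (false, false) ∈ (Wn n) := by
        have : (false, false) ∈ ((Wn n).drop j).take 2 := by rw [h]; simp
        exact List.drop_subset _ _ (List.take_subset _ _ this)
      simpa using Wn_snd n _ hmem
    rw [Finset.sum_eq_zero hneg, sub_zero]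
    rw [sum_even _ ?_ n]
    · apply Finset.sum_congr rfl
      intro k hk
      rw [Finset.mem_range] at hk
      rw [Wn_drop k n hk.le, Wn_take k n hk.le, mk_Wn]
      have : n - k = (n - k - 1) + 1 := by omega
      rw [this, Wn_take_two, if_pos rfl]
    · intro k
      rw [if_neg]
      intro h
      rcases le_or_gt n k with hle | hlt
      · -- drop too far: list becomes short
        have hd : (Wn n).drop (2*k+1) = [] := by
          apply List.drop_eq_nil_of_le
          rw [Wn_length]; omega
        rw [hd] at h; simp [blk] at h
      · have hdrop : (Wn n).drop (2*k+1) = (false,true) :: Wn (n - k - 1) := by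
          have h1 : (Wn n).drop (2*k) = Wn (n-k) := Wn_drop k n hlt.le
          have h2 : n - k = (n - k - 1) + 1 := by omega
          have : (Wn n).drop (2*k+1) = ((Wn n).drop (2*k)).drop 1 := by
            rw [List.drop_drop]
          rw [this, h1, h2, Wn_succ]
          simp
        rw [hdrop] at h
        simp [blk, List.take_cons] at h
  have part2 : ∀ n : ℕ, 1 ≤ n →
      brooks ρ (fa * fb) e ((fa * fb) ^ n)
          - ρ (fa * fb) (brooks ρ (fa * fb) e ((fa * fb) ^ n))
        = e - ρ ((fa * fb) ^ n) e := by
    intro n hn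
    rw [part1 n hn]
    have hmap : (ρ (fa*fb)) (∑ i ∈ Finset.range n, ρ ((fa * fb) ^ i) e)
        = ∑ i ∈ Finset.range n, ρ ((fa * fb) ^ (i+1)) e := by
      rw [map_sum]
      apply Finset.sum_congr rfl
      intro i _
      have hm : ρ ((fa*fb) ^ (i+1)) = ρ (fa*fb) * ρ ((fa*fb)^i) := by
        rw [pow_succ', map_mul]
      rw [hm]
      rfl
    rw [hmap, ← Finset.sum_sub_distrib, Finset.sum_range_sub' (fun i => ρ ((fa*fb)^i) e) n]
    simp
  refine ⟨part1, part2, ?_⟩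
  intro T hT1 hT2 n hn
  set H := brooks ρ (fa * fb) e ((fa * fb) ^ n) with hHdef
  have hEq : H = T (e - ρ ((fa * fb) ^ n) e) := by
    rw [← part2 n hn]
    exact (hT1 H).symm
  calc ‖H‖ = ‖T (e - ρ ((fa * fb) ^ n) e)‖ := by rw [hEq]
    _ ≤ ‖T‖ * ‖e - ρ ((fa * fb) ^ n) e‖ := T.le_opNorm _
    _ ≤ ‖T‖ * (‖e‖ + ‖ρ ((fa * fb) ^ n) e‖) :=
        mul_le_mul_of_nonneg_left (norm_sub_le _ _) (norm_nonneg _)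
    _ = 2 * ‖T‖ * ‖e‖ := by rw [LinearIsometryEquiv.norm_map]; ring
end
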